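/- Let $G$ be a finite abelian group and let $H \leq G$ be a subgroup such that $\exp(G) = \exp(H) \cdot \exp(G/H)$. Then $s(G) \leq \exp(G/H)\,(s(H) - 1) + s(G/H)$. -/

import Mathlib

/-- The Erdős–Ginzburg–Ziv constant `s(A)`: the smallest `ℓ ∈ ℕ` such that every
multiset `S` over `A` of length `≥ ℓ` has a zero-sum sub-multiset of length `exp(A)`. -/
noncomputable def EGZ (A : Type) [AddCommGroup A] : ℕ :=
  sInf {ℓ : ℕ | ∀ S : Multiset A, ℓ ≤ Multiset.card S →
    ∃ T ≤ S, Multiset.card T = AddMonoid.exponent A ∧ T.sum = 0}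

lemma egz_set_nonempty (A : Type) [AddCommGroup A] [Finite A] :
    {ℓ : ℕ | ∀ S : Multiset A, ℓ ≤ Multiset.card S →
      ∃ T ≤ S, Multiset.card T = AddMonoid.exponent A ∧ T.sum = 0}.Nonempty := by
  classical
  haveI := Fintype.ofFinite A
  refine ⟨Fintype.card A * (AddMonoid.exponent A - 1) + 1, ?_⟩
  intro S hS
  have hexp : AddMonoid.exponent A ≠ 0 := AddMonoid.exponent_ne_zero_of_finite
  have hcnt : ∃ a : A, AddMonoid.exponent A ≤ S.count a := by
    by_contra h
    push_neg at h
    have hle : Multiset.card S ≤ Fintype.card A * (AddMonoid.exponent A - 1) := by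
      calc Multiset.card S = ∑ a ∈ S.toFinset, S.count a :=
            (Multiset.toFinset_sum_count_eq S).symm
        _ ≤ ∑ _a ∈ S.toFinset, (AddMonoid.exponent A - 1) :=
            Finset.sum_le_sum fun a _ => Nat.le_sub_one_of_lt (h a)
        _ = S.toFinset.card * (AddMonoid.exponent A - 1) := by
            rw [Finset.sum_const, smul_eq_mul]
        _ ≤ Fintype.card A * (AddMonoid.exponent A - 1) :=
            Nat.mul_le_mul_right _ (S.toFinset.card_le_univ)
    omega
  obtain ⟨a, ha⟩ := hcnt
  refine ⟨Multiset.replicate (AddMonoid.exponent A) a,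
    Multiset.le_count_iff_replicate_le.mp ha, by simp, ?_⟩
  rw [Multiset.sum_replicate]
  exact AddMonoid.exponent_nsmul_eq_zero a

lemma egz_spec (A : Type) [AddCommGroup A] [Finite A] :
    ∀ S : Multiset A, EGZ A ≤ Multiset.card S →
      ∃ T ≤ S, Multiset.card T = AddMonoid.exponent A ∧ T.sum = 0 :=
  Nat.sInf_mem (egz_set_nonempty A)

lemma egz_pos (A : Type) [AddCommGroup A] [Finite A] : 1 ≤ EGZ A := by
  by_contra h
  push_neg at h
  have h0 : EGZ A = 0 := Nat.lt_one_iff.mp h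
  obtain ⟨T, hT, hcard, -⟩ := egz_spec A 0 (by simp [h0])
  have hT0 : T = 0 := Multiset.le_zero.mp hT
  rw [hT0] at hcard
  simp only [Multiset.card_zero] at hcard
  exact AddMonoid.exponent_ne_zero_of_finite hcard.symm

lemma multiset_exists_le_map {α β : Type*} {f : α → β} :
    ∀ (T : Multiset β) (S : Multiset α), T ≤ S.map f → ∃ U ≤ S, U.map f = T := by
  classical
  intro T
  induction T using Multiset.induction_on with
  | empty => exact fun S _ => ⟨0, Multiset.zero_le _, rfl⟩
  | cons b T ih =>
    intro S hle
    have hb : b ∈ S.map f := Multiset.mem_of_le hle (Multiset.mem_cons_self b T)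
    obtain ⟨a, haS, hfa⟩ := Multiset.mem_map.mp hb
    have hS : S = a ::ₘ S.erase a := (Multiset.cons_erase haS).symm
    have hle' : b ::ₘ T ≤ b ::ₘ (S.erase a).map f := by
      rw [hS, Multiset.map_cons, hfa] at hle; exact hle
    obtain ⟨U, hU, hUm⟩ := ih (S.erase a) ((Multiset.cons_le_cons_iff b).mp hle')
    exact ⟨a ::ₘ U, by rw [hS]; exact Multiset.cons_le_cons a hU,
      by rw [Multiset.map_cons, hfa, hUm]⟩

lemma multiset_sum_sum {G : Type*} [AddCommMonoid G] (C : Multiset (Multiset G)) :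
    C.sum.sum = (C.map Multiset.sum).sum := by
  induction C using Multiset.induction_on with
  | empty => simp
  | cons s C ih => simp [ih]

lemma multiset_card_sum {G : Type*} (C : Multiset (Multiset G)) :
    Multiset.card C.sum = (C.map Multiset.card).sum := by
  induction C using Multiset.induction_on with
  | empty => simp
  | cons s C ih => simp [ih]

lemma multiset_sum_le_sum {G : Type*} {C C' : Multiset (Multiset G)} (h : C' ≤ C) :
    C'.sum ≤ C.sum := by
  obtain ⟨u, rfl⟩ := Multiset.le_iff_exists_add.mp h
  rw [Multiset.sum_add]
  exact Multiset.le_add_right _ _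

lemma egz_extract (G : Type) [AddCommGroup G] [Finite G] (H : AddSubgroup G) :
    ∀ (k : ℕ) (S : Multiset G),
      AddMonoid.exponent (G ⧸ H) * k + EGZ (G ⧸ H)
        ≤ Multiset.card S + AddMonoid.exponent (G ⧸ H) →
      ∃ C : Multiset (Multiset G), Multiset.card C = k ∧ C.sum ≤ S ∧
        ∀ T ∈ C, Multiset.card T = AddMonoid.exponent (G ⧸ H) ∧ T.sum ∈ H := by
  classical
  intro k
  induction k with
  | zero => exact fun S _ => ⟨0, by simp, Multiset.zero_le _, by simp⟩
  | succ k ih =>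
    intro S hS
    set n := AddMonoid.exponent (G ⧸ H) with hn
    have hpos : 0 < n := Nat.pos_of_ne_zero AddMonoid.exponent_ne_zero_of_finite
    have hcard : EGZ (G ⧸ H) ≤ Multiset.card S := by nlinarith [Nat.mul_le_mul_left n (Nat.le_add_left 1 k)]
    obtain ⟨T', hT'le, hT'card, hT'sum⟩ := egz_spec (G ⧸ H)
      (S.map (QuotientAddGroup.mk' H)) (by rwa [Multiset.card_map])
    obtain ⟨U, hUS, hUm⟩ := multiset_exists_le_map T' S hT'le
    have hUcard : Multiset.card U = n := by
      rw [hn, ← hT'card, ← hUm, Multiset.card_map]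
    have hUsum : U.sum ∈ H := by
      rw [← QuotientAddGroup.eq_zero_iff]
      have := map_multiset_sum (QuotientAddGroup.mk' H) U
      rw [hUm, hT'sum] at this
      exact this
    obtain ⟨C, hCcard, hCle, hCprop⟩ := ih (S - U) (by
      have h1 : Multiset.card (S - U) = Multiset.card S - n := by
        rw [Multiset.card_sub hUS, hUcard]
      have h2 : n ≤ Multiset.card S := hUcard ▸ Multiset.card_le_card hUS
      have := hS
      rw [Nat.mul_succ] at this
      omega)
    refine ⟨U ::ₘ C, by simp [hCcard], ?_, ?_⟩
    · rw [Multiset.sum_cons]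
      calc U + C.sum ≤ U + (S - U) := add_le_add_right hCle U
        _ = S := add_tsub_cancel_of_le hUS
    · intro T hT
      rcases Multiset.mem_cons.mp hT with rfl | hT
      · exact ⟨hUcard, hUsum⟩
      · exact hCprop T hT

theorem egz_subgroup_quotient (G : Type) [AddCommGroup G] [Finite G] (H : AddSubgroup G)
    (hexp : AddMonoid.exponent G = AddMonoid.exponent H * AddMonoid.exponent (G ⧸ H)) :
    EGZ G ≤ AddMonoid.exponent (G ⧸ H) * (EGZ H - 1) + EGZ (G ⧸ H) := by
  classical
  apply Nat.sInf_le
  intro S hS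
  have hH1 : 1 ≤ EGZ H := egz_pos H
  -- extract EGZ H disjoint submultisets of size n whose sums lie in H
  obtain ⟨C, hCcard, hCle, hCprop⟩ := egz_extract G H (EGZ H) S (by
    have hmm : AddMonoid.exponent (G ⧸ H) * EGZ H
        = AddMonoid.exponent (G ⧸ H) * (EGZ H - 1) + AddMonoid.exponent (G ⧸ H) := by
      rw [← Nat.mul_succ]; congr 1; omega
    omega)
  -- map to a multiset over H
  set M : Multiset H := C.attach.map (fun x => (⟨x.1.sum, (hCprop x.1 x.2).2⟩ : H)) with hM
  have hMcard : Multiset.card M = EGZ H := by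
    rw [hM, Multiset.card_map, Multiset.card_attach, hCcard]
  obtain ⟨TH, hTHle, hTHcard, hTHsum⟩ := egz_spec H M (by rw [hMcard])
  rw [hM] at hTHle
  obtain ⟨A, hA, hAm⟩ := multiset_exists_le_map TH C.attach hTHle
  set C' : Multiset (Multiset G) := A.map Subtype.val with hC'
  have hC'C : C' ≤ C := by
    have := Multiset.map_le_map (f := Subtype.val) hA
    rwa [Multiset.attach_map_val] at this
  refine ⟨C'.sum, le_trans (multiset_sum_le_sum hC'C) hCle, ?_, ?_⟩
  · -- cardinality
    rw [multiset_card_sum]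
    have hmap : C'.map Multiset.card
        = Multiset.replicate (Multiset.card C') (AddMonoid.exponent (G ⧸ H)) := by
      rw [Multiset.eq_replicate]
      refine ⟨by rw [Multiset.card_map], ?_⟩
      intro b hb
      obtain ⟨T, hT, rfl⟩ := Multiset.mem_map.mp hb
      exact (hCprop T (Multiset.mem_of_le hC'C hT)).1
    rw [hmap, Multiset.sum_replicate, smul_eq_mul]
    have hC'card : Multiset.card C' = AddMonoid.exponent H := by
      rw [hC', Multiset.card_map, ← hTHcard, ← hAm, Multiset.card_map]
    rw [hC'card, hexp]
  · -- sum is zero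
    rw [multiset_sum_sum]
    have : C'.map Multiset.sum = TH.map (H.subtype) := by
      rw [hC', Multiset.map_map, ← hAm, Multiset.map_map]
      rfl
    rw [this, ← map_multiset_sum, hTHsum, map_zero]
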